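/- For any g-frame {Λ_i} with frame operator S and any alternate dual g-frame {Γ_i}, and for all x ∈ H: ∑_i ‖Λ_i S^{-1} x − Γ_i x‖² = ∑_i ‖Γ_i x‖² − ⟨x, S^{-1} x⟩. -/

import Mathlib

open scoped InnerProductSpace

/-- For a g-frame `{Λ i}` with frame operator `S` and an alternate dual g-frame
`{Γ i}`, for all `x`: `∑ i ‖Λ i S⁻¹ x − Γ i x‖² = ∑ i ‖Γ i x‖² − ⟨x, S⁻¹ x⟩`. -/
theorem gframe_alternate_dual_canonical_dist
    {H K : Type*} [NormedAddCommGroup H] [InnerProductSpace ℂ H] [CompleteSpace H]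
    [NormedAddCommGroup K] [InnerProductSpace ℂ K] [CompleteSpace K]
    {I : Type*} (Λ Γ : I → (H →L[ℂ] K)) (S Sinv : H →L[ℂ] H)
    (A B C D : ℝ) (hA : 0 < A) (hB : 0 < B) (hC : 0 < C) (hD : 0 < D)
    (hΛsum : ∀ x : H, Summable fun i => ‖Λ i x‖ ^ 2)
    (hΛlow : ∀ x : H, A * ‖x‖ ^ 2 ≤ ∑' i, ‖Λ i x‖ ^ 2)
    (hΛup : ∀ x : H, ∑' i, ‖Λ i x‖ ^ 2 ≤ B * ‖x‖ ^ 2)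
    (hΓsum : ∀ x : H, Summable fun i => ‖Γ i x‖ ^ 2)
    (hΓlow : ∀ x : H, C * ‖x‖ ^ 2 ≤ ∑' i, ‖Γ i x‖ ^ 2)
    (hΓup : ∀ x : H, ∑' i, ‖Γ i x‖ ^ 2 ≤ D * ‖x‖ ^ 2)
    (hS : ∀ x : H, HasSum (fun i => (Λ i).adjoint (Λ i x)) (S x))
    (hSinv₁ : ∀ x : H, S (Sinv x) = x) (hSinv₂ : ∀ x : H, Sinv (S x) = x)
    (hdual : ∀ x : H, HasSum (fun i => (Λ i).adjoint (Γ i x)) x) :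
    ∀ x : H, ∑' i, ‖Λ i (Sinv x) - Γ i x‖ ^ 2
      = (∑' i, ‖Γ i x‖ ^ 2) - RCLike.re (⟪x, Sinv x⟫_ℂ) := by
  intro x
  set y := Sinv x with hy
  -- sum of ‖Λ i y‖² is re ⟪y, x⟫
  have h1 : HasSum (fun i => ‖Λ i y‖ ^ 2) (RCLike.re (⟪y, x⟫_ℂ)) := by
    have := ((hS y).mapL (innerSL ℂ y)).mapL (RCLike.reCLM)
    simp only [innerSL_apply_apply, ContinuousLinearMap.adjoint_inner_right] at this
    rw [hSinv₁ x] at this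
    simpa [inner_self_eq_norm_sq, ← Complex.ofReal_pow] using this
  -- sum of re ⟪Λ i y, Γ i x⟫ is re ⟪y, x⟫
  have h2 : HasSum (fun i => RCLike.re (⟪Λ i y, Γ i x⟫_ℂ)) (RCLike.re (⟪y, x⟫_ℂ)) := by
    have := ((hdual x).mapL (innerSL ℂ y)).mapL (RCLike.reCLM)
    simp only [innerSL_apply_apply, ContinuousLinearMap.adjoint_inner_right] at this
    simpa using this
  have h3 : HasSum (fun i => ‖Γ i x‖ ^ 2) (∑' i, ‖Γ i x‖ ^ 2) := (hΓsum x).hasSum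
  have h4 : HasSum (fun i => ‖Λ i y - Γ i x‖ ^ 2)
      ((∑' i, ‖Γ i x‖ ^ 2) - RCLike.re (⟪y, x⟫_ℂ)) := by
    have := (h1.add h3).sub (h2.mul_left 2)
    have heq : ∀ i, ‖Λ i y - Γ i x‖ ^ 2
        = ‖Λ i y‖ ^ 2 + ‖Γ i x‖ ^ 2 - 2 * RCLike.re (⟪Λ i y, Γ i x⟫_ℂ) := by
      intro i
      have := @norm_sub_sq ℂ K _ _ _ (Λ i y) (Γ i x)
      rw [this]; ring
    simp only [heq]
    convert this using 1
    · rfl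
    ring
  rw [h4.tsum_eq]
  congr 1
  exact inner_re_symm y x
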